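/- Completeness of the algorithm: for any program P, if there is a fact-set step sequence from ∅ to D under P and D is saturated, then there is an algorithmic step sequence from ⊥ to the promotion (D)⁺ under P, and (D)⁺ is a model of P (T_P((D)⁺) = {(D)⁺}). -/
import Mathlib


open scoped Classical

namespace FCLP

/-! ### Terms -/

/-- Ground (Herbrand) terms: uninterpreted function symbols applied to ground terms. -/
inductive GTerm : Type where
  | func : ℕ → List GTerm → GTerm

/-- Terms possibly containing variables. -/
inductive VTerm : Type where
  | var : ℕ → VTerm
  | func : ℕ → List VTerm → VTerm

/-- A substitution is a total map from variables to ground terms. -/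
abbrev Subst := ℕ → GTerm

mutual
  /-- Applying a substitution to a term. -/
  def VTerm.subst (σ : Subst) : VTerm → GTerm
    | .var x => σ x
    | .func f args => .func f (VTerm.substList σ args)
  def VTerm.substList (σ : Subst) : List VTerm → List GTerm
    | [] => []
    | t :: ts => VTerm.subst σ t :: VTerm.substList σ ts
end

/-- The variable `x` occurs in the term. -/
inductive VTerm.HasVar : VTerm → ℕ → Prop where
  | var (x : ℕ) : VTerm.HasVar (.var x) x
  | func {f : ℕ} {args : List VTerm} {t : VTerm} {x : ℕ} :
      t ∈ args → VTerm.HasVar t x → VTerm.HasVar (.func f args) x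

/-! ### Attributes, facts, rules, programs -/

/-- An attribute `p(t₁,...,tₙ)`: a predicate applied to ground terms. -/
structure Attr where
  pred : ℕ
  args : List GTerm

/-- A fact `p(t̄) is v`. -/
structure Fact where
  attr : Attr
  value : GTerm

/-- A premise `p(t̄) is v`, possibly containing variables. -/
structure VAtom where
  pred : ℕ
  args : List VTerm
  value : VTerm

def VAtom.subst (σ : Subst) (A : VAtom) : Fact :=
  ⟨⟨A.pred, A.args.map (VTerm.subst σ)⟩, A.value.subst σ⟩

def VAtom.HasVar (A : VAtom) (x : ℕ) : Prop :=
  (∃ t ∈ A.args, t.HasVar x) ∨ A.value.HasVar x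

/-- A rule head: open `p(t̄) is? v` or closed `p(t̄) is {v₁,...,vₘ}`. -/
inductive Head : Type where
  | opn : ℕ → List VTerm → VTerm → Head
  | closed : ℕ → List VTerm → List VTerm → Head

def Head.HasVar : Head → ℕ → Prop
  | .opn _ args v, x => (∃ t ∈ args, t.HasVar x) ∨ v.HasVar x
  | .closed _ args vs, x => (∃ t ∈ args, t.HasVar x) ∨ ∃ v ∈ vs, v.HasVar x

/-- The ground attribute of a rule head under a substitution. -/
def Head.groundAttr (σ : Subst) : Head → Attr
  | .opn p args _ => ⟨p, args.map (VTerm.subst σ)⟩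
  | .closed p args _ => ⟨p, args.map (VTerm.subst σ)⟩

/-- A rule `H ← F` with a finite collection of premises. -/
structure Rule where
  head : Head
  prems : List VAtom

/-- Wellformedness: closed heads offer at least one value, and every
variable in the head occurs in a premise. -/
def Rule.WF (r : Rule) : Prop :=
  (∀ x, r.head.HasVar x → ∃ A ∈ r.prems, A.HasVar x) ∧
  (∀ p args vs, r.head = .closed p args vs → vs ≠ [])

/-- A program is a set of rules. -/
abbrev Program := Set Rule

/-- A program is a *finite* set of *wellformed* rules. -/
def Program.WFP (P : Program) : Prop := P.Finite ∧ ∀ r ∈ P, r.WF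

/-! ### Fact-set semantics -/

/-- A set of facts is consistent when each attribute has at most one value. -/
def Consistent (D : Set Fact) : Prop :=
  ∀ f ∈ D, ∀ g ∈ D, f.attr = g.attr → f = g

/-- `σ` satisfies the premises `F` in the fact-set database `D`. -/
def satF (σ : Subst) (F : List VAtom) (D : Set Fact) : Prop :=
  ∀ A ∈ F, A.subst σ ∈ D

/-- Fact-set evolution `D →_P S`. -/
inductive Evolve (P : Program) : Set Fact → Set (Set Fact) → Prop where
  | triv (D : Set Fact) : Evolve P D {D}
  | closed {D : Set Fact} {r : Rule} {p : ℕ} {args vs : List VTerm} {σ : Subst} :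
      r ∈ P → r.head = .closed p args vs → satF σ r.prems D →
      Evolve P D
        { E | ∃ v ∈ vs,
            E = insert (⟨⟨p, args.map (VTerm.subst σ)⟩, VTerm.subst σ v⟩ : Fact) D ∧
            Consistent E }
  | opn {D : Set Fact} {r : Rule} {p : ℕ} {args : List VTerm} {v : VTerm} {σ : Subst} :
      r ∈ P → r.head = .opn p args v → satF σ r.prems D →
      Evolve P D
        ({D} ∪ { E | E = insert (⟨⟨p, args.map (VTerm.subst σ)⟩, VTerm.subst σ v⟩ : Fact) D ∧
                     Consistent E })

/-- `P` allows `D` to step to `D'`. -/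
def Step (P : Program) (D D' : Set Fact) : Prop := ∃ S, Evolve P D S ∧ D' ∈ S

/-- A database is saturated when its only evolution is the singleton of itself. -/
def Saturated (P : Program) (D : Set Fact) : Prop := ∀ S, Evolve P D S → S = {D}

/-- A solution: a saturated database reachable from `∅` by a (finite) step sequence. -/
def Solution (P : Program) (D : Set Fact) : Prop :=
  Relation.ReflTransGen (Step P) ∅ D ∧ Saturated P D

/-! ### Constraints and constraint databases -/

/-- A constraint: `just t` or `noneOf X`. -/
inductive Constraint : Type where
  | just : GTerm → Constraint
  | noneOf : Set GTerm → Constraint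

/-- The order on constraints. -/
def Constraint.le : Constraint → Constraint → Prop
  | .noneOf X, .noneOf Y => X ⊆ Y
  | .noneOf X, .just t => t ∉ X
  | .just t, .just t' => t = t'
  | .just _, .noneOf _ => False

instance : LE Constraint := ⟨Constraint.le⟩

/-- Least upper bound of a (compatible) set of constraints: if some `just t` is present
it is the lub; otherwise it is `noneOf` of the union. -/
noncomputable def Constraint.lub (C : Set Constraint) : Constraint :=
  if h : ∃ t, Constraint.just t ∈ C then .just h.choose
  else .noneOf (⋃₀ { X | Constraint.noneOf X ∈ C })

/-- A constraint database: a map from ground attributes to constraints,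
ordered pointwise (via the `Pi` order). -/
abbrev CDB := Attr → Constraint

/-- The least constraint database: every attribute maps to `noneOf ∅`. -/
def cdbBot : CDB := fun _ => .noneOf ∅

/-- Pointwise least upper bound of a (compatible) set of constraint databases. -/
noncomputable def CDB.lub (S : Set CDB) : CDB :=
  fun a => Constraint.lub ((fun Δ => Δ a) '' S)

/-- A subset of a poset is compatible when it has an upper bound. -/
def Compatible {α : Type*} [LE α] (X : Set α) : Prop := ∃ y, ∀ x ∈ X, x ≤ y

/-- Binary compatibility. -/
def Compat {α : Type*} [LE α] (x y : α) : Prop := Compatible ({x, y} : Set α)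

/-- A choice set: a pairwise-incompatible set of constraint databases. -/
def IsChoiceSet (𝒞 : Set CDB) : Prop :=
  ∀ D ∈ 𝒞, ∀ E ∈ 𝒞, Compat D E → D = E

/-- The order on choice sets. -/
def ChoiceLE (𝒞₁ 𝒞₂ : Set CDB) : Prop :=
  ∀ D₂ ∈ 𝒞₂, ∃ D₁ ∈ 𝒞₁, D₁ ≤ D₂

/-- Least upper bound of an indexed family of choice sets:
`⋁ᵢ 𝒞ᵢ = { ⋁ Im(f) : f ∈ ∏ᵢ 𝒞ᵢ, Im(f) compatible }`. -/
noncomputable def ChoiceJoin {I : Type*} (𝒞 : I → Set CDB) : Set CDB :=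
  { E | ∃ f : I → CDB, (∀ i, f i ∈ 𝒞 i) ∧ Compatible (Set.range f) ∧
        E = CDB.lub (Set.range f) }

/-- Least upper bound of a set of choice sets. -/
noncomputable def ChoiceSJoin (S : Set (Set CDB)) : Set CDB :=
  ChoiceJoin (fun C : S => (C : Set CDB))

/-- Greatest lower bound of a set of choice sets:
`⋀ X = ⋁ {𝒞 : ∀ x ∈ X, 𝒞 ≤ x}` (join over choice-set lower bounds). -/
noncomputable def ChoiceMeet (S : Set (Set CDB)) : Set CDB :=
  ChoiceSJoin { C | IsChoiceSet C ∧ ∀ X ∈ S, ChoiceLE C X }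

/-! ### Immediate consequence -/

/-- `σ` satisfies `F` in the constraint database `Δ`. -/
def satC (σ : Subst) (F : List VAtom) (Δ : CDB) : Prop :=
  ∀ A ∈ F, Constraint.just (A.value.subst σ) ≤ Δ ⟨A.pred, A.args.map (VTerm.subst σ)⟩

/-- The constraint database mapping `a` to `c` and every other attribute to `noneOf ∅`. -/
noncomputable def unitCDB (a : Attr) (c : Constraint) : CDB :=
  fun a' => if a' = a then c else .noneOf ∅

/-- The choice set `⟨σH⟩` determined by a ground rule head. -/
noncomputable def headChoice (σ : Subst) : Head → Set CDB
  | .opn p args v =>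
      { unitCDB ⟨p, args.map (VTerm.subst σ)⟩ (.just (v.subst σ)),
        unitCDB ⟨p, args.map (VTerm.subst σ)⟩ (.noneOf {v.subst σ}) }
  | .closed p args vs =>
      { Δ | ∃ v ∈ vs, Δ = unitCDB ⟨p, args.map (VTerm.subst σ)⟩ (.just (v.subst σ)) }

/-- The immediate consequence operator
`T_P(Δ) = {Δ} ∨ ⋁{ ⟨σH⟩ : (H ← F) ∈ P, σ satisfies F in Δ }`. -/
noncomputable def TP (P : Program) (Δ : CDB) : Set CDB :=
  ChoiceSJoin
    (insert {Δ} { C | ∃ r ∈ P, ∃ σ : Subst, satC σ r.prems Δ ∧ C = headChoice σ r.head })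

/-- The attribute-specific immediate consequence operator `T_{P[a]}`. -/
noncomputable def TPa (P : Program) (a : Attr) (Δ : CDB) : Set CDB :=
  ChoiceSJoin
    { C | ∃ r ∈ P, ∃ σ : Subst, satC σ r.prems Δ ∧ r.head.groundAttr σ = a ∧
          C = headChoice σ r.head }

/-- The lifted immediate consequence operator `T_P*(𝒞) = ⋃_{Δ ∈ 𝒞} T_P(Δ)`. -/
noncomputable def TPs (P : Program) (𝒞 : Set CDB) : Set CDB :=
  { E | ∃ Δ ∈ 𝒞, E ∈ TP P Δ }

/-- The least fixed point of `T_P*`, defined à la Knaster–Tarski as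
`⋀ {𝒞 : T_P*(𝒞) ≤ 𝒞}`. -/
noncomputable def lfpTPs (P : Program) : Set CDB :=
  ChoiceMeet { C | IsChoiceSet C ∧ ChoiceLE (TPs P C) C }

/-! ### Positive and finite constraint databases, promotion and erasure -/

/-- A constraint database is positive when `noneOf X` only occurs with `X = ∅`. -/
def CDBPositive (Δ : CDB) : Prop := ∀ a X, Δ a = .noneOf X → X = ∅

/-- A constraint database is finite. -/
def CDBFinite (Δ : CDB) : Prop :=
  { a | Δ a ≠ .noneOf ∅ }.Finite ∧ ∀ a X, Δ a = .noneOf X → X.Finite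

/-- Promotion of a (consistent) fact set to a constraint database. -/
noncomputable def promote (D : Set Fact) : CDB :=
  fun a => if h : ∃ v, (⟨a, v⟩ : Fact) ∈ D then .just h.choose else .noneOf ∅

/-- Erasure of a constraint database to a fact set. -/
def eraseCDB (Δ : CDB) : Set Fact := { f | Δ f.attr = .just f.value }

/-! ### The abstract algorithm -/

/-- `P` allows `Δ` to take an algorithmic step to any `Δ' ∈ {Δ} ∨ T_{P[a]}(Δ)`
for some attribute `a`, provided `T_P(Δ) ≠ ∅`. -/
noncomputable def AlgStep (P : Program) (Δ Δ' : CDB) : Prop :=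
  TP P Δ ≠ ∅ ∧ ∃ a : Attr, Δ' ∈ ChoiceSJoin {({Δ} : Set CDB), TPa P a Δ}

/-! ### Datalog -/

/-- A datalog atom, possibly with variables. -/
structure DAtom where
  pred : ℕ
  args : List VTerm

/-- A ground datalog atom. -/
structure GAtom where
  pred : ℕ
  args : List GTerm

def DAtom.subst (σ : Subst) (A : DAtom) : GAtom := ⟨A.pred, A.args.map (VTerm.subst σ)⟩

/-- A datalog rule `p(t̄) ← p₁(t̄₁), ..., pₙ(t̄ₙ)`. -/
structure DRule where
  head : DAtom
  prems : List DAtom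

/-- Every variable of the head appears in a premise. -/
def DRule.WF (r : DRule) : Prop :=
  ∀ x, (∃ t ∈ r.head.args, t.HasVar x) → ∃ A ∈ r.prems, ∃ t ∈ A.args, t.HasVar x

/-- The datalog immediate consequence operator. -/
def dImmCons (P : Set DRule) (X : Set GAtom) : Set GAtom :=
  { g | ∃ r ∈ P, ∃ σ : Subst, (∀ A ∈ r.prems, A.subst σ ∈ X) ∧ g = r.head.subst σ }

/-- The least model of a datalog program: the least fixed point of `dImmCons`. -/
def dModel (P : Set DRule) : Set GAtom := ⋂₀ { X | dImmCons P X ⊆ X }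

/-- Translation of a datalog program to a finite-choice logic program, using the
constant with (fresh) function symbol `u` as the value `unit`. -/
def trDatalog (u : ℕ) (P : Set DRule) : Program :=
  { r | ∃ dr ∈ P,
      r = ⟨Head.closed dr.head.pred dr.head.args [VTerm.func u []],
           dr.prems.map (fun A => ⟨A.pred, A.args, VTerm.func u []⟩)⟩ }

/-! ### Answer set programming -/

/-- A ground ASP rule `p ← p₁,...,pₙ, ¬q₁,...,¬qₘ` over propositional atoms. -/
structure ASPRule where
  head : ℕ
  pos : List ℕ
  neg : List ℕ

/-- One step of the immediate consequence operator of the reduct `P^X`. -/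
def reductCons (P : Set ASPRule) (X : Set ℕ) (Y : Set ℕ) : Set ℕ :=
  { p | ∃ r ∈ P, r.head = p ∧ (∀ q ∈ r.pos, q ∈ Y) ∧ (∀ q ∈ r.neg, q ∉ X) }

/-- The least model of the reduct `P^X`. -/
def reductModel (P : Set ASPRule) (X : Set ℕ) : Set ℕ :=
  ⋂₀ { Y | reductCons P X Y ⊆ Y }

/-- `X` is a stable model of `P` when the least model of the reduct `P^X` equals `X`. -/
def StableModel (P : Set ASPRule) (X : Set ℕ) : Prop := reductModel P X = X

/-- The fresh constant `tt` (as a ground term). -/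
def ttT : GTerm := .func 0 []
/-- The fresh constant `ff` (as a ground term). -/
def ffT : GTerm := .func 1 []
/-- The constant `tt` as a (closed) term of the rule language. -/
def ttV : VTerm := .func 0 []
/-- The constant `ff` as a (closed) term of the rule language. -/
def ffV : VTerm := .func 1 []

/-- The premise `p is tt`. -/
def posPrem (p : ℕ) : VAtom := ⟨p, [], ttV⟩
/-- The premise `q is ff`. -/
def negPrem (q : ℕ) : VAtom := ⟨q, [], ffV⟩

/-- Translation of an ASP program to a finite-choice logic program: each rule
`p ← p₁,...,pₙ, ¬q₁,...,¬qₘ` becomes `m` open rules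
`qⱼ is? ff ← p₁ is tt,...,pₙ is tt, q₁ is ff,...,q_{j-1} is ff` and one closed rule
`p is {tt} ← p₁ is tt,...,pₙ is tt, q₁ is ff,...,qₘ is ff`. -/
def trASP (P : Set ASPRule) : Program :=
  { r | ∃ ar ∈ P,
      (∃ j : Fin ar.neg.length,
        r = ⟨Head.opn (ar.neg.get j) [] ffV,
             ar.pos.map posPrem ++ (ar.neg.take j.val).map negPrem⟩) ∨
      r = ⟨Head.closed ar.head [] [ttV],
           ar.pos.map posPrem ++ ar.neg.map negPrem⟩ }

/-! ### Auxiliary lemmas for the completeness proof -/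

/- #### Constraint order -/

lemma Constraint.just_le_just {t t' : GTerm} :
    (Constraint.just t ≤ Constraint.just t') ↔ t = t' := Iff.rfl

lemma Constraint.noneOf_le_just {X : Set GTerm} {t : GTerm} :
    (Constraint.noneOf X ≤ Constraint.just t) ↔ t ∉ X := Iff.rfl

lemma Constraint.noneOf_le_noneOf {X Y : Set GTerm} :
    (Constraint.noneOf X ≤ Constraint.noneOf Y) ↔ X ⊆ Y := Iff.rfl

lemma Constraint.not_just_le_noneOf {t : GTerm} {X : Set GTerm} :
    ¬ (Constraint.just t ≤ Constraint.noneOf X) := fun h => h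

lemma Constraint.le_refl' (c : Constraint) : c ≤ c := by
  cases c with
  | just t => exact rfl
  | noneOf X => exact fun x hx => hx

lemma Constraint.bot_le' (c : Constraint) : Constraint.noneOf ∅ ≤ c := by
  cases c with
  | just t => exact Set.notMem_empty t
  | noneOf X => exact Set.empty_subset X

lemma Constraint.just_le_iff {t : GTerm} {c : Constraint} :
    Constraint.just t ≤ c ↔ c = Constraint.just t := by
  cases c with
  | just t' =>
      constructor
      · intro h; rw [Constraint.just_le_just] at h; rw [h]
      · intro h; injection h with h; exact h.symm
  | noneOf X =>
      exact iff_of_false Constraint.not_just_le_noneOf (fun h => Constraint.noConfusion h)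

/- #### Constraint lub -/

lemma Constraint.lub_eq_of_mem_le {C : Set Constraint} {x : Constraint}
    (hx : x ∈ C) (h : ∀ c ∈ C, c ≤ x) : Constraint.lub C = x := by
  cases x with
  | just t =>
      have hex : ∃ t', Constraint.just t' ∈ C := ⟨t, hx⟩
      rw [Constraint.lub, dif_pos hex]
      exact congrArg Constraint.just (Constraint.just_le_just.mp (h _ hex.choose_spec))
  | noneOf X =>
      have hnex : ¬ ∃ t, Constraint.just t ∈ C := by
        rintro ⟨t, ht⟩; exact h _ ht
      rw [Constraint.lub, dif_neg hnex]
      congr 1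
      apply Set.eq_of_subset_of_subset
      · rintro x ⟨Y, hY, hxY⟩
        exact (Constraint.noneOf_le_noneOf.mp (h _ hY)) hxY
      · intro x hxX
        exact ⟨X, hx, hxX⟩

lemma Constraint.lub_le {C : Set Constraint} {y : Constraint}
    (h : ∀ c ∈ C, c ≤ y) : Constraint.lub C ≤ y := by
  rw [Constraint.lub]
  split_ifs with hex
  · exact h _ hex.choose_spec
  · cases y with
    | just t =>
        rw [Constraint.noneOf_le_just]
        rintro ⟨Y, hY, htY⟩
        exact (Constraint.noneOf_le_just.mp (h _ hY)) htY
    | noneOf Y =>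
        rw [Constraint.noneOf_le_noneOf]
        rintro x ⟨Z, hZ, hxZ⟩
        exact (Constraint.noneOf_le_noneOf.mp (h _ hZ)) hxZ

lemma Constraint.lub_all_bot {C : Set Constraint}
    (h : ∀ c ∈ C, c = Constraint.noneOf ∅) : Constraint.lub C = Constraint.noneOf ∅ := by
  have hnex : ¬ ∃ t, Constraint.just t ∈ C := by
    rintro ⟨t, ht⟩; exact Constraint.noConfusion (h _ ht)
  rw [Constraint.lub, dif_neg hnex]
  congr 1
  apply Set.eq_of_subset_of_subset
  · rintro x ⟨Y, hY, hxY⟩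
    have := h _ hY
    injection this with h'
    rw [h'] at hxY; exact hxY
  · exact Set.empty_subset _

/- #### CDB order and lub -/

lemma cdb_le_def {Δ Δ' : CDB} : Δ ≤ Δ' ↔ ∀ a, Δ a ≤ Δ' a := Iff.rfl

lemma cdb_le_refl (Δ : CDB) : Δ ≤ Δ := fun a => Constraint.le_refl' (Δ a)

lemma CDB.lub_eq_of_mem_le {S : Set CDB} {Δ : CDB}
    (hΔ : Δ ∈ S) (h : ∀ e ∈ S, e ≤ Δ) : CDB.lub S = Δ := by
  funext a
  apply Constraint.lub_eq_of_mem_le (C := (fun Δ' => Δ' a) '' S) ⟨Δ, hΔ, rfl⟩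
  rintro c ⟨e, he, rfl⟩
  exact h e he a

lemma CDB.lub_le {S : Set CDB} {y : CDB} (h : ∀ e ∈ S, e ≤ y) : CDB.lub S ≤ y := by
  intro a
  apply Constraint.lub_le
  rintro c ⟨e, he, rfl⟩
  exact h e he a

/- #### unitCDB -/

lemma unitCDB_apply_self (a : Attr) (c : Constraint) : unitCDB a c a = c := if_pos rfl

lemma unitCDB_apply_ne {a a' : Attr} (c : Constraint) (h : a' ≠ a) :
    unitCDB a c a' = Constraint.noneOf ∅ := if_neg h

lemma unitCDB_le {a : Attr} {c : Constraint} {Δ : CDB} :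
    unitCDB a c ≤ Δ ↔ c ≤ Δ a := by
  constructor
  · intro h
    have := h a
    rwa [unitCDB_apply_self] at this
  · intro h a'
    by_cases ha : a' = a
    · subst ha; rwa [unitCDB_apply_self]
    · rw [unitCDB_apply_ne _ ha]; exact Constraint.bot_le' _

lemma headChoice_apply_ne {σ : Subst} {H : Head} {e : CDB} (he : e ∈ headChoice σ H)
    {a' : Attr} (h : a' ≠ H.groundAttr σ) : e a' = Constraint.noneOf ∅ := by
  cases H with
  | opn p args v =>
      rcases he with he | he
      all_goals (rw [he]; exact unitCDB_apply_ne _ h)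
  | closed p args vs =>
      obtain ⟨v, hv, rfl⟩ := he
      exact unitCDB_apply_ne _ h

/- #### Facts and consistency -/

lemma Fact.ext' {f g : Fact} (h1 : f.attr = g.attr) (h2 : f.value = g.value) : f = g := by
  cases f; cases g; cases h1; cases h2; rfl

lemma consistent_empty : Consistent (∅ : Set Fact) := fun f hf => absurd hf (Set.notMem_empty f)

lemma inconsistent_insert {D : Set Fact} {f : Fact} (hD : Consistent D)
    (h : ¬ Consistent (insert f D)) :
    ∃ g ∈ D, g.attr = f.attr ∧ g.value ≠ f.value := by
  by_contra hcon
  push_neg at hcon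
  apply h
  intro x hx y hy hattr
  rcases Set.mem_insert_iff.mp hx with hxf | hxD
  · rcases Set.mem_insert_iff.mp hy with hyf | hyD
    · rw [hxf, hyf]
    · rw [hxf] at hattr ⊢
      exact (Fact.ext' hattr.symm (hcon y hyD hattr.symm)).symm
  · rcases Set.mem_insert_iff.mp hy with hyf | hyD
    · rw [hyf] at hattr ⊢
      exact Fact.ext' hattr (hcon x hxD hattr)
    · exact hD x hxD y hyD hattr

/- #### promote -/

lemma promote_eq_of {D : Set Fact} (hD : Consistent D) {a : Attr} {v : GTerm}
    (hv : (⟨a, v⟩ : Fact) ∈ D) : promote D a = Constraint.just v := by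
  have hex : ∃ v', (⟨a, v'⟩ : Fact) ∈ D := ⟨v, hv⟩
  rw [promote, dif_pos hex]
  have := hD _ hex.choose_spec _ hv rfl
  exact congrArg Constraint.just (congrArg Fact.value this)

lemma promote_noneOf_of {D : Set Fact} {a : Attr} (h : ∀ v, (⟨a, v⟩ : Fact) ∉ D) :
    promote D a = Constraint.noneOf ∅ := by
  rw [promote, dif_neg]
  rintro ⟨v, hv⟩; exact h v hv

lemma promote_cases (D : Set Fact) (a : Attr) :
    (∃ v, promote D a = Constraint.just v ∧ (⟨a, v⟩ : Fact) ∈ D) ∨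
      promote D a = Constraint.noneOf ∅ := by
  by_cases h : ∃ v, (⟨a, v⟩ : Fact) ∈ D
  · exact Or.inl ⟨h.choose, by rw [promote, dif_pos h], h.choose_spec⟩
  · exact Or.inr (by rw [promote, dif_neg h])

lemma promote_just_iff {D : Set Fact} (hD : Consistent D) {a : Attr} {v : GTerm} :
    promote D a = Constraint.just v ↔ (⟨a, v⟩ : Fact) ∈ D := by
  constructor
  · intro h
    rcases promote_cases D a with ⟨v', hv', hmem⟩ | hb
    · rw [hv'] at h; injection h with h; rwa [← h]
    · rw [hb] at h; exact Constraint.noConfusion h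
  · exact promote_eq_of hD

lemma promote_mono {D₀ D₁ : Set Fact} (hsub : D₀ ⊆ D₁) (h1 : Consistent D₁) :
    promote D₀ ≤ promote D₁ := by
  intro a
  rcases promote_cases D₀ a with ⟨v, hv, hmem⟩ | hb
  · rw [hv, promote_eq_of h1 (hsub hmem)]; exact rfl
  · rw [hb]; exact Constraint.bot_le' _

lemma promote_empty : promote (∅ : Set Fact) = cdbBot := by
  funext a
  exact promote_noneOf_of (fun v hv => absurd hv (Set.notMem_empty _))

/- #### satC and satF -/

lemma satF_mono {σ : Subst} {F : List VAtom} {D₀ D₁ : Set Fact} (h : D₀ ⊆ D₁)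
    (hs : satF σ F D₀) : satF σ F D₁ := fun A hA => h (hs A hA)

lemma satC_promote {σ : Subst} {F : List VAtom} {D : Set Fact} (hD : Consistent D) :
    satC σ F (promote D) ↔ satF σ F D := by
  constructor
  · intro h A hA
    have := Constraint.just_le_iff.mp (h A hA)
    exact (promote_just_iff hD).mp this
  · intro h A hA
    rw [Constraint.just_le_iff]
    exact (promote_just_iff hD).mpr (h A hA)

/- #### Steps: monotonicity and consistency -/

lemma step_mono {P : Program} {D₀ D₁ : Set Fact} (h : Step P D₀ D₁) : D₀ ⊆ D₁ := by
  obtain ⟨S, hev, hmem⟩ := h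
  cases hev with
  | triv => rw [Set.mem_singleton_iff.mp hmem]
  | closed hr hh hs =>
      obtain ⟨v, hv, heq, _⟩ := hmem
      rw [heq]; exact Set.subset_insert _ _
  | opn hr hh hs =>
      rcases hmem with hmem | ⟨heq, _⟩
      · rw [Set.mem_singleton_iff.mp hmem]
      · rw [heq]; exact Set.subset_insert _ _

lemma step_consistent {P : Program} {D₀ D₁ : Set Fact} (h0 : Consistent D₀)
    (h : Step P D₀ D₁) : Consistent D₁ := by
  obtain ⟨S, hev, hmem⟩ := h
  cases hev with
  | triv => rw [Set.mem_singleton_iff.mp hmem]; exact h0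
  | closed hr hh hs =>
      obtain ⟨v, hv, heq, hcons⟩ := hmem
      exact hcons
  | opn hr hh hs =>
      rcases hmem with hmem | ⟨heq, hcons⟩
      · rw [Set.mem_singleton_iff.mp hmem]; exact h0
      · exact hcons

/- #### Choice set joins -/

lemma mem_choiceSJoin (S : Set (Set CDB)) (x : CDB) :
    x ∈ ChoiceSJoin S ↔ ∃ f : S → CDB, (∀ C : S, f C ∈ (C : Set CDB)) ∧
      Compatible (Set.range f) ∧ x = CDB.lub (Set.range f) := Iff.rfl

lemma choiceSJoin_nonempty {S : Set (Set CDB)} {y : CDB}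
    (h : ∀ C ∈ S, ∃ e ∈ C, e ≤ y) : (ChoiceSJoin S).Nonempty := by
  have hch : ∀ C : S, (h C.1 C.2).choose ∈ (C : Set CDB) ∧ (h C.1 C.2).choose ≤ y :=
    fun C => (h C.1 C.2).choose_spec
  refine ⟨CDB.lub (Set.range fun C : S => (h C.1 C.2).choose),
    ⟨fun C : S => (h C.1 C.2).choose, fun C => (hch C).1, ⟨y, ?_⟩, rfl⟩⟩
  rintro x ⟨C, rfl⟩
  exact (hch C).2

lemma mem_choiceSJoin_self {S : Set (Set CDB)} {Δ : CDB}
    (hΔ : ({Δ} : Set CDB) ∈ S) (h : ∀ C ∈ S, ∃ e ∈ C, e ≤ Δ) : Δ ∈ ChoiceSJoin S := by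
  have hch : ∀ C : S, (h C.1 C.2).choose ∈ (C : Set CDB) ∧ (h C.1 C.2).choose ≤ Δ :=
    fun C => (h C.1 C.2).choose_spec
  set f : S → CDB := fun C => (h C.1 C.2).choose with hf
  have hΔr : Δ ∈ Set.range f := by
    refine ⟨⟨{Δ}, hΔ⟩, ?_⟩
    have := (hch ⟨{Δ}, hΔ⟩).1
    exact Set.mem_singleton_iff.mp this
  refine ⟨f, fun C => (hch C).1, ⟨Δ, ?_⟩, ?_⟩
  · rintro x ⟨C, rfl⟩; exact (hch C).2
  · exact (CDB.lub_eq_of_mem_le hΔr (by rintro x ⟨C, rfl⟩; exact (hch C).2)).symm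

lemma choiceSJoin_subset_singleton {S : Set (Set CDB)} {Δ : CDB}
    (hΔ : ({Δ} : Set CDB) ∈ S) (h : ∀ C ∈ S, ∀ e ∈ C, Compat e Δ → e ≤ Δ) :
    ChoiceSJoin S ⊆ {Δ} := by
  rintro x ⟨f, hf, ⟨y, hy⟩, rfl⟩
  have hΔr : Δ ∈ Set.range f :=
    ⟨⟨{Δ}, hΔ⟩, Set.mem_singleton_iff.mp (hf ⟨{Δ}, hΔ⟩)⟩
  have hle : ∀ e ∈ Set.range f, e ≤ Δ := by
    rintro e ⟨C, rfl⟩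
    refine h C.1 C.2 (f C) (hf C) ⟨y, ?_⟩
    rintro z hz
    rcases Set.mem_insert_iff.mp hz with rfl | hz
    · exact hy _ ⟨C, rfl⟩
    · rw [Set.mem_singleton_iff.mp hz]; exact hy _ hΔr
  exact Set.mem_singleton_iff.mpr (CDB.lub_eq_of_mem_le hΔr hle)

lemma mem_choiceSJoin_pair {Δ₀ t E : CDB} {T : Set CDB} (ht : t ∈ T)
    (hcomp : Compatible ({Δ₀, t} : Set CDB)) (hE : E = CDB.lub {Δ₀, t}) :
    E ∈ ChoiceSJoin {({Δ₀} : Set CDB), T} := by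
  set S : Set (Set CDB) := {({Δ₀} : Set CDB), T} with hS
  set f : S → CDB := fun C => if (C : Set CDB) = {Δ₀} then Δ₀ else t with hfdef
  have hrange : Set.range f = {Δ₀, t} := by
    apply Set.eq_of_subset_of_subset
    · rintro x ⟨C, rfl⟩
      by_cases hc : (C : Set CDB) = {Δ₀}
      · simp only [hfdef, if_pos hc]; exact Set.mem_insert _ _
      · simp only [hfdef, if_neg hc]; exact Set.mem_insert_of_mem _ rfl
    · rintro x hx
      rcases Set.mem_insert_iff.mp hx with hxe | hx
      · have hm : ({Δ₀} : Set CDB) ∈ S := Set.mem_insert _ _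
        rw [hxe]
        exact ⟨⟨_, hm⟩, if_pos rfl⟩
      · rw [Set.mem_singleton_iff.mp hx]
        by_cases hT : T = ({Δ₀} : Set CDB)
        · refine ⟨⟨T, Set.mem_insert_of_mem _ rfl⟩, ?_⟩
          simp only [hfdef, if_pos hT]
          have : t ∈ ({Δ₀} : Set CDB) := hT ▸ ht
          exact (Set.mem_singleton_iff.mp this).symm
        · exact ⟨⟨T, Set.mem_insert_of_mem _ rfl⟩, if_neg hT⟩
  refine ⟨f, ?_, ?_, ?_⟩
  · rintro ⟨C, hC⟩
    rcases Set.mem_insert_iff.mp hC with hc | hc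
    · simp only [hfdef, if_pos hc]; rw [hc]; rfl
    · by_cases hc' : C = ({Δ₀} : Set CDB)
      · simp only [hfdef, if_pos hc']; rw [hc']; rfl
      · simp only [hfdef, if_neg hc']; rw [hc]; exact ht
  · rw [hrange]; exact hcomp
  · rw [hrange]; exact hE

lemma CDB.lub_pair_eq {Δ₀ t Δ₁ : CDB} (h₀ : Δ₀ ≤ Δ₁) (ht : t ≤ Δ₁)
    (hcover : ∀ a, Δ₁ a = Δ₀ a ∨ Δ₁ a = t a) : CDB.lub {Δ₀, t} = Δ₁ := by
  funext a
  have himg : (fun Δ' : CDB => Δ' a) '' {Δ₀, t} = {Δ₀ a, t a} := Set.image_pair _ _ _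
  rw [CDB.lub, himg]
  rcases hcover a with hc | hc
  · rw [hc]
    apply Constraint.lub_eq_of_mem_le (Set.mem_insert _ _)
    rintro c hcm
    rcases Set.mem_insert_iff.mp hcm with rfl | hcm
    · exact Constraint.le_refl' _
    · rw [Set.mem_singleton_iff.mp hcm, ← hc]; exact ht a
  · rw [hc]
    apply Constraint.lub_eq_of_mem_le
      (show t a ∈ ({Δ₀ a, t a} : Set Constraint) from Set.mem_insert_of_mem _ rfl)
    rintro c hcm
    rcases Set.mem_insert_iff.mp hcm with rfl | hcm
    · rw [← hc]; exact h₀ a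
    · rw [Set.mem_singleton_iff.mp hcm]; exact Constraint.le_refl' _
/- #### Saturation: compatibility of head choices with the promoted database -/

lemma head_le {P : Program} {D : Set Fact} (hDc : Consistent D) (hsat : Saturated P D)
    {r : Rule} (hr : r ∈ P) {σ : Subst} (hs : satF σ r.prems D) :
    (∃ e ∈ headChoice σ r.head, e ≤ promote D) ∧
      (∀ e ∈ headChoice σ r.head, Compat e (promote D) → e ≤ promote D) := by
  rcases hH : r.head with ⟨p, args, v⟩ | ⟨p, args, vs⟩
  · -- open head
    set a : Attr := ⟨p, args.map (VTerm.subst σ)⟩ with ha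
    set fact : Fact := ⟨a, VTerm.subst σ v⟩ with hfact
    have hset := hsat _ (Evolve.opn hr hH hs)
    have hdisj : fact ∈ D ∨ ∃ g ∈ D, g.attr = a ∧ g.value ≠ VTerm.subst σ v := by
      by_cases hcons : Consistent (insert fact D)
      · left
        have hmem : insert fact D ∈ ({D} : Set (Set Fact)) := by
          rw [← hset]; exact Or.inr ⟨rfl, hcons⟩
        have : insert fact D = D := Set.mem_singleton_iff.mp hmem
        rw [← this]; exact Set.mem_insert _ _
      · right
        obtain ⟨g, hg, h1, h2⟩ := inconsistent_insert hDc hcons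
        exact ⟨g, hg, h1, h2⟩
    rcases hdisj with hfD | ⟨g, hg, hga, hgv⟩
    · have hDa : promote D a = Constraint.just (VTerm.subst σ v) := promote_eq_of hDc hfD
      constructor
      · refine ⟨unitCDB a (Constraint.just (VTerm.subst σ v)), Set.mem_insert _ _, ?_⟩
        rw [unitCDB_le, hDa]; exact rfl
      · rintro e he ⟨y, hy⟩
        rcases Set.mem_insert_iff.mp he with he | he
        · rw [he, unitCDB_le, hDa]; exact rfl
        · exfalso
          rw [Set.mem_singleton_iff.mp he] at hy
          have h1 : unitCDB a (Constraint.noneOf {VTerm.subst σ v}) ≤ y :=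
            hy _ (Set.mem_insert _ _)
          have h2 : promote D ≤ y := hy _ (Set.mem_insert_of_mem _ rfl)
          have h1a := h1 a
          rw [unitCDB_apply_self] at h1a
          have h2a := h2 a
          rw [hDa] at h2a
          rw [Constraint.just_le_iff.mp h2a] at h1a
          exact (Constraint.noneOf_le_just.mp h1a) rfl
    · have hDa : promote D a = Constraint.just g.value := by
        have : (⟨a, g.value⟩ : Fact) ∈ D := by
          have : g = ⟨a, g.value⟩ := Fact.ext' hga rfl
          rwa [← this]
        exact promote_eq_of hDc this
      constructor
      · refine ⟨unitCDB a (Constraint.noneOf {VTerm.subst σ v}),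
          Set.mem_insert_of_mem _ rfl, ?_⟩
        rw [unitCDB_le, hDa, Constraint.noneOf_le_just]
        exact fun hc => hgv (Set.mem_singleton_iff.mp hc)
      · rintro e he ⟨y, hy⟩
        rcases Set.mem_insert_iff.mp he with he | he
        · exfalso
          rw [he] at hy
          have h1 : unitCDB a (Constraint.just (VTerm.subst σ v)) ≤ y :=
            hy _ (Set.mem_insert _ _)
          have h2 : promote D ≤ y := hy _ (Set.mem_insert_of_mem _ rfl)
          have h1a := h1 a
          rw [unitCDB_apply_self] at h1a
          have h2a := h2 a
          rw [hDa] at h2a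
          rw [Constraint.just_le_iff.mp h1a] at h2a
          exact hgv (Constraint.just_le_just.mp h2a)
        · rw [Set.mem_singleton_iff.mp he, unitCDB_le, hDa, Constraint.noneOf_le_just]
          exact fun hc => hgv (Set.mem_singleton_iff.mp hc)
  · -- closed head
    set a : Attr := ⟨p, args.map (VTerm.subst σ)⟩ with ha
    have hset := hsat _ (Evolve.closed hr hH hs)
    have hD : D ∈ { E | ∃ v ∈ vs,
        E = insert (⟨⟨p, args.map (VTerm.subst σ)⟩, VTerm.subst σ v⟩ : Fact) D ∧
          Consistent E } := by
      rw [hset]; rfl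
    obtain ⟨v₀, hv₀, hEq, -⟩ := hD
    have hf₀ : (⟨a, VTerm.subst σ v₀⟩ : Fact) ∈ D := by
      rw [hEq]; exact Set.mem_insert _ _
    have hDa : promote D a = Constraint.just (VTerm.subst σ v₀) := promote_eq_of hDc hf₀
    constructor
    · refine ⟨unitCDB a (Constraint.just (VTerm.subst σ v₀)), ⟨v₀, hv₀, rfl⟩, ?_⟩
      rw [unitCDB_le, hDa]; exact rfl
    · rintro e he ⟨y, hy⟩
      obtain ⟨v, hv, rfl⟩ := he
      have h1 : unitCDB a (Constraint.just (VTerm.subst σ v)) ≤ y :=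
        hy _ (Set.mem_insert _ _)
      have h2 : promote D ≤ y := hy _ (Set.mem_insert_of_mem _ rfl)
      have h1a := h1 a
      rw [unitCDB_apply_self] at h1a
      have h2a := h2 a
      rw [hDa] at h2a
      rw [Constraint.just_le_iff.mp h1a] at h2a
      rw [unitCDB_le, hDa, Constraint.just_le_just]
      exact (Constraint.just_le_just.mp h2a).symm
/- #### The key algorithmic step -/

lemma alg_step_insert {P : Program} {D b : Set Fact} (hDc : Consistent D)
    (hsat : Saturated P D) (hbc : Consistent b) (hbD : b ⊆ D)
    {r : Rule} (hr : r ∈ P) {σ : Subst} (hs : satF σ r.prems b)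
    {a0 : Attr} {w : GTerm} (ha0 : r.head.groundAttr σ = a0)
    (hw : unitCDB a0 (Constraint.just w) ∈ headChoice σ r.head)
    (hnin : (⟨a0, w⟩ : Fact) ∉ b) (hcons : Consistent (insert (⟨a0, w⟩ : Fact) b))
    (hcD : insert (⟨a0, w⟩ : Fact) b ⊆ D) :
    AlgStep P (promote b) (promote (insert (⟨a0, w⟩ : Fact) b)) := by
  have hfD : (⟨a0, w⟩ : Fact) ∈ D := hcD (Set.mem_insert _ _)
  have hDa0 : promote D a0 = Constraint.just w := promote_eq_of hDc hfD
  have hbled : promote b ≤ promote D := promote_mono hbD hDc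
  constructor
  · -- TP is nonempty
    apply Set.nonempty_iff_ne_empty.mp
    apply choiceSJoin_nonempty (y := promote D)
    intro C hC
    rcases Set.mem_insert_iff.mp hC with hC | hC
    · exact ⟨promote b, by rw [hC]; rfl, hbled⟩
    · obtain ⟨r', hr', σ', hsC, rfl⟩ := hC
      exact (head_le hDc hsat hr' (satF_mono hbD ((satC_promote hbc).mp hsC))).1
  · refine ⟨a0, ?_⟩
    set MS : Set (Set CDB) := { C | ∃ r' ∈ P, ∃ σ' : Subst, satC σ' r'.prems (promote b) ∧
      r'.head.groundAttr σ' = a0 ∧ C = headChoice σ' r'.head } with hMS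
    have key : ∀ C ∈ MS, ∃ e, e ∈ C ∧ e ≤ promote D ∧
        (unitCDB a0 (Constraint.just w) ∈ C → e = unitCDB a0 (Constraint.just w)) := by
      intro C hC
      by_cases hu : unitCDB a0 (Constraint.just w) ∈ C
      · refine ⟨_, hu, ?_, fun _ => rfl⟩
        rw [unitCDB_le, hDa0]; exact rfl
      · obtain ⟨r', hr', σ', hsC, hga, hCeq⟩ := hC
        subst hCeq
        obtain ⟨e, he, hle⟩ :=
          (head_le hDc hsat hr' (satF_mono hbD ((satC_promote hbc).mp hsC))).1
        exact ⟨e, he, hle, fun h => absurd h hu⟩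
    set g : MS → CDB := fun C => (key C.1 C.2).choose with hg
    have hgspec : ∀ C : MS, g C ∈ (C : Set CDB) ∧ g C ≤ promote D ∧
        (unitCDB a0 (Constraint.just w) ∈ (C : Set CDB) →
          g C = unitCDB a0 (Constraint.just w)) :=
      fun C => (key C.1 C.2).choose_spec
    set t : CDB := CDB.lub (Set.range g) with htdef
    have htT : t ∈ TPa P a0 (promote b) := by
      refine ⟨g, fun C => (hgspec C).1, ⟨promote D, ?_⟩, rfl⟩
      rintro x ⟨C, rfl⟩; exact (hgspec C).2.1
    have hC0 : headChoice σ r.head ∈ MS :=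
      ⟨r, hr, σ, (satC_promote hbc).mpr hs, ha0, rfl⟩
    have hu0 : unitCDB a0 (Constraint.just w) ∈ Set.range g :=
      ⟨⟨_, hC0⟩, (hgspec ⟨_, hC0⟩).2.2 hw⟩
    have hta0 : t a0 = Constraint.just w := by
      rw [htdef]
      apply Constraint.lub_eq_of_mem_le (x := Constraint.just w)
      · exact ⟨unitCDB a0 (Constraint.just w), hu0, unitCDB_apply_self _ _⟩
      · rintro c ⟨e, ⟨C, rfl⟩, rfl⟩
        have := (hgspec C).2.1 a0
        rwa [hDa0] at this
    have htne : ∀ a', a' ≠ a0 → t a' = Constraint.noneOf ∅ := by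
      intro a' ha'
      rw [htdef]
      apply Constraint.lub_all_bot
      rintro c ⟨e, ⟨C, rfl⟩, rfl⟩
      obtain ⟨r', hr', σ', hsC, hga, hCeq⟩ := C.2
      have hmem : g C ∈ headChoice σ' r'.head := hCeq ▸ (hgspec C).1
      exact headChoice_apply_ne hmem (by rw [hga]; exact ha')
    have hca0 : promote (insert (⟨a0, w⟩ : Fact) b) a0 = Constraint.just w :=
      promote_eq_of hcons (Set.mem_insert _ _)
    have hcne : ∀ a', a' ≠ a0 →
        promote (insert (⟨a0, w⟩ : Fact) b) a' = promote b a' := by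
      intro a' ha'
      by_cases hex : ∃ v, (⟨a', v⟩ : Fact) ∈ b
      · obtain ⟨v, hv⟩ := hex
        rw [promote_eq_of hbc hv, promote_eq_of hcons (Set.mem_insert_of_mem _ hv)]
      · push_neg at hex
        rw [promote_noneOf_of hex, promote_noneOf_of]
        intro v hv
        rcases Set.mem_insert_iff.mp hv with hvf | hvb
        · exact ha' (congrArg Fact.attr hvf)
        · exact hex v hvb
    apply mem_choiceSJoin_pair htT
    · refine ⟨promote D, ?_⟩
      rintro x hx
      rcases Set.mem_insert_iff.mp hx with hxe | hx
      · rw [hxe]; exact hbled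
      · rw [Set.mem_singleton_iff.mp hx, htdef]
        apply CDB.lub_le
        rintro e ⟨C, rfl⟩; exact (hgspec C).2.1
    · symm
      apply CDB.lub_pair_eq
      · exact promote_mono (Set.subset_insert _ _) hcons
      · intro a'
        by_cases ha' : a' = a0
        · rw [ha', hta0, hca0]; exact rfl
        · rw [htne a' ha']; exact Constraint.bot_le' _
      · intro a'
        by_cases ha' : a' = a0
        · right; rw [ha', hta0, hca0]
        · left; exact hcne a' ha'
/- #### The promoted saturated database is a model -/

lemma tp_saturated {P : Program} {D : Set Fact} (hDc : Consistent D)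
    (hsat : Saturated P D) : TP P (promote D) = {promote D} := by
  apply Set.eq_of_subset_of_subset
  · apply choiceSJoin_subset_singleton (Set.mem_insert _ _)
    intro C hC e he hcompat
    rcases Set.mem_insert_iff.mp hC with hC | hC
    · rw [hC] at he
      rw [Set.mem_singleton_iff.mp he]
      exact cdb_le_refl _
    · obtain ⟨r', hr', σ', hsC, rfl⟩ := hC
      exact (head_le hDc hsat hr' ((satC_promote hDc).mp hsC)).2 e he hcompat
  · intro x hx
    rw [Set.mem_singleton_iff.mp hx]
    apply mem_choiceSJoin_self (Set.mem_insert _ _)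
    intro C hC
    rcases Set.mem_insert_iff.mp hC with hC | hC
    · exact ⟨promote D, by rw [hC]; rfl, cdb_le_refl _⟩
    · obtain ⟨r', hr', σ', hsC, rfl⟩ := hC
      exact (head_le hDc hsat hr' ((satC_promote hDc).mp hsC)).1

/- #### Fact-set steps are simulated by algorithmic steps -/

lemma step_to_alg {P : Program} {D b c : Set Fact} (hDc : Consistent D)
    (hsat : Saturated P D) (hbc : Consistent b) (hbD : b ⊆ D) (hstep : Step P b c)
    (hcD : c ⊆ D) :
    Relation.ReflTransGen (AlgStep P) (promote b) (promote c) := by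
  obtain ⟨S, hev, hmem⟩ := hstep
  cases hev with
  | triv =>
      rw [Set.mem_singleton_iff.mp hmem]
  | @closed r p args vs σ hr hH hsF =>
      obtain ⟨v, hv, hceq, hccons⟩ := hmem
      subst hceq
      by_cases hmem2 : (⟨⟨p, args.map (VTerm.subst σ)⟩, VTerm.subst σ v⟩ : Fact) ∈ b
      · rw [Set.insert_eq_self.mpr hmem2]
      · refine Relation.ReflTransGen.single
          (alg_step_insert hDc hsat hbc hbD hr hsF ?_ ?_ hmem2 hccons hcD)
        · rw [hH]; rfl
        · rw [hH]; exact ⟨v, hv, rfl⟩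
  | @opn r p args v σ hr hH hsF =>
      rcases hmem with hmem | ⟨hceq, hccons⟩
      · rw [Set.mem_singleton_iff.mp hmem]
      · subst hceq
        by_cases hmem2 : (⟨⟨p, args.map (VTerm.subst σ)⟩, VTerm.subst σ v⟩ : Fact) ∈ b
        · rw [Set.insert_eq_self.mpr hmem2]
        · refine Relation.ReflTransGen.single
            (alg_step_insert hDc hsat hbc hbD hr hsF ?_ ?_ hmem2 hccons hcD)
          · rw [hH]; rfl
          · rw [hH]; exact Set.mem_insert _ _
/-- Completeness of the algorithm: if `∅ … D` is a fact-set step sequence and `D`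
is saturated, then there is an algorithmic step sequence from `⊥` to `(D)⁺`, and
`(D)⁺` is a model of `P`. -/
theorem algorithm_completeness (P : Program) (hP : Program.WFP P) (D : Set Fact)
    (hseq : Relation.ReflTransGen (Step P) ∅ D) (hsat : Saturated P D) :
    Relation.ReflTransGen (AlgStep P) cdbBot (promote D) ∧
      TP P (promote D) = {promote D} := by
  have hDc : Consistent D := by
    clear hsat
    induction hseq with
    | refl => exact consistent_empty
    | tail hab hbc ih => exact step_consistent ih hbc
  have aux : ∀ E : Set Fact, Relation.ReflTransGen (Step P) ∅ E →
      Consistent E ∧ (E ⊆ D → Relation.ReflTransGen (AlgStep P) cdbBot (promote E)) := by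
    intro E hE
    induction hE with
    | refl =>
        refine ⟨consistent_empty, fun _ => ?_⟩
        rw [promote_empty]
    | @tail b c hab hbc ih =>
        have hbcons := ih.1
        refine ⟨step_consistent hbcons hbc, fun hcD => ?_⟩
        have hbD : b ⊆ D := (step_mono hbc).trans hcD
        exact Relation.ReflTransGen.trans (ih.2 hbD)
          (step_to_alg hDc hsat hbcons hbD hbc hcD)
  exact ⟨(aux D hseq).2 subset_rfl, tp_saturated hDc hsat⟩

end FCLP
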